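/- There is no continuous map T : S → S, where S is the Riemann surface of the q-th root (q ≥ 2), covering the translation z ↦ z + c on ℂ for any fixed c ≠ 0: precisely, if π : S → ℂ is the q-sheeted ramified covering with ramification point over 0, there exists no continuous T : S → S with π ∘ T = (· + c) ∘ π. -/

import Mathlib

open Complex Polynomial

/-- A continuous function on a preconnected space taking values in a finite set is constant. -/
private lemma const_of_mem_finset {X : Type*} [TopologicalSpace X] [PreconnectedSpace X]
    {f : X → ℂ} (hf : Continuous f) (S : Finset ℂ) (hS : ∀ x, f x ∈ S) (x y : X) :
    f x = f y := by
  classical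
  have hA : IsClopen {a | f a = f x} := by
    refine ⟨isClosed_eq hf continuous_const, ?_⟩
    have he : {a | f a = f x} = (f ⁻¹' ((S.erase (f x)) : Set ℂ))ᶜ := by
      ext a
      simp only [Set.mem_setOf_eq, Set.mem_compl_iff, Set.mem_preimage, Finset.mem_coe,
        Finset.mem_erase]
      constructor
      · rintro h ⟨hne, _⟩; exact hne h
      · intro h
        by_contra hne
        exact h ⟨hne, hS a⟩
    rw [he]
    exact (((S.erase (f x)).finite_toSet.isClosed).preimage hf).isOpen_compl
  have hxA : x ∈ {a | f a = f x} := rfl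
  rcases isClopen_iff.mp hA with h | h
  · rw [h] at hxA; exact hxA.elim
  · have hyA : y ∈ {a | f a = f x} := h.symm ▸ Set.mem_univ y
    exact hyA.symm

/-- Set version of the previous lemma. -/
private lemma const_of_finset {U : Set ℂ} (hU : IsPreconnected U) {f : ℂ → ℂ}
    (hf : ContinuousOn f U) (S : Finset ℂ) (hS : ∀ x ∈ U, f x ∈ S)
    {x y : ℂ} (hx : x ∈ U) (hy : y ∈ U) : f x = f y := by
  haveI : PreconnectedSpace U := Subtype.preconnectedSpace hU
  exact const_of_mem_finset (f := fun a : U => f a) hf.restrict S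
    (fun a => hS a a.2) ⟨x, hx⟩ ⟨y, hy⟩

private lemma rank_fact : (1 : Cardinal) < Module.rank ℝ ℂ := by
  rw [Complex.rank_real_complex]; norm_num

/-- The Riemann surface of the `q`-th root is biholomorphic to `ℂ` via the
`q`-sheeted ramified covering `π : ℂ → ℂ`, `π w = w ^ q`, ramified over `0`.
There is no continuous lift `T` of the translation `z ↦ z + c` for `c ≠ 0`. -/
theorem no_continuous_translation_on_root_surface (q : ℕ) (hq : 2 ≤ q)
    (c : ℂ) (hc : c ≠ 0) :
    ¬ ∃ T : ℂ → ℂ, Continuous T ∧ ∀ w : ℂ, (T w) ^ q = w ^ q + c := by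
  classical
  rintro ⟨T, hT, hTq⟩
  have hq0 : q ≠ 0 := by omega
  have hq0' : (0:ℕ) < q := by omega
  haveI : NeZero q := ⟨hq0⟩
  set ω : ℂ := Complex.exp (2 * Real.pi * Complex.I / q) with hωdef
  have hprim : IsPrimitiveRoot ω q := Complex.isPrimitiveRoot_exp q hq0
  have hωq : ω ^ q = 1 := hprim.pow_eq_one
  have hωne1 : ω ≠ 1 := hprim.ne_one (by omega)
  have hωne0 : ω ≠ 0 := Complex.exp_ne_zero _
  -- the finset of `q`-th roots of unity
  set S : Finset ℂ := (Polynomial.nthRoots q (1:ℂ)).toFinset with hSdef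
  have hmemS : ∀ x : ℂ, x ^ q = 1 → x ∈ S := fun x hx => by
    rw [hSdef, Multiset.mem_toFinset, Polynomial.mem_nthRoots hq0']; exact hx
  -- Step 1: the domain U
  set U : Set ℂ := {w | w ^ q + c ≠ 0} with hUdef
  have hUc : IsPreconnected U := by
    have hfin : ({w : ℂ | w ^ q + c = 0}).Countable := by
      have heq : {w : ℂ | w ^ q + c = 0} = {x | (X ^ q + C c : ℂ[X]).IsRoot x} := by
        ext w; simp [Polynomial.IsRoot]
      rw [heq]
      exact (Polynomial.finite_setOf_isRoot (Polynomial.X_pow_add_C_ne_zero hq0' c)).countable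
    have hpc := hfin.isPathConnected_compl_of_one_lt_rank rank_fact
    have heq2 : {w : ℂ | w ^ q + c = 0}ᶜ = U := by
      ext w; simp [hUdef]
    rw [heq2] at hpc
    exact hpc.isConnected.isPreconnected
  have hTne : ∀ w ∈ U, T w ≠ 0 := by
    intro w hw hw0
    apply hw
    rw [← hTq w, hw0, zero_pow hq0]
  have h0U : (0:ℂ) ∈ U := by
    simp only [hUdef, Set.mem_setOf_eq, zero_pow hq0, zero_add]
    exact hc
  -- Step 1: T (ω * w) = T w for all w
  have hrot : ∀ w : ℂ, T (ω * w) = T w := by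
    have key : ∀ w ∈ U, T (ω * w) / T w = T (ω * 0) / T 0 := by
      intro w hw
      refine const_of_finset hUc (f := fun w => T (ω * w) / T w) ?_ S ?_ hw h0U
      · exact ((hT.comp (continuous_const.mul continuous_id)).continuousOn.div
          hT.continuousOn fun x hx => hTne x hx)
      · intro x hx
        apply hmemS
        have hnum : T (ω * x) ^ q = T x ^ q := by
          rw [hTq, hTq, mul_pow, hωq, one_mul]
        rw [div_pow, hnum, div_self]
        rw [hTq]
        exact hx
    intro w
    rcases Classical.em (w ∈ U) with hw | hw
    · have := key w hw
      rw [mul_zero, div_self (hTne 0 h0U)] at this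
      exact (div_eq_one_iff_eq (hTne w hw)).mp this
    · have hw' : w ^ q + c = 0 := not_not.mp hw
      have h1 : T w = 0 := by
        have := hTq w
        rw [hw'] at this
        exact pow_eq_zero_iff hq0 |>.mp this
      have h2 : T (ω * w) = 0 := by
        have := hTq (ω * w)
        rw [mul_pow, hωq, one_mul, hw'] at this
        exact pow_eq_zero_iff hq0 |>.mp this
      rw [h1, h2]
  have hrotk : ∀ (k : ℕ) (w : ℂ), T (ω ^ k * w) = T w := by
    intro k
    induction k with
    | zero => intro w; simp
    | succ k ih =>
      intro w
      have he : ω ^ (k+1) * w = ω ^ k * (ω * w) := by ring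
      rw [he, ih, hrot]
  -- T is constant on fibers of w ↦ w ^ q
  have hfib : ∀ w₁ w₂ : ℂ, w₁ ^ q = w₂ ^ q → T w₁ = T w₂ := by
    intro w₁ w₂ h
    rcases eq_or_ne w₂ 0 with rfl | h2
    · rw [zero_pow hq0, pow_eq_zero_iff hq0] at h
      rw [h]
    · have hx : (w₁ / w₂) ^ q = 1 := by
        rw [div_pow, h, div_self (pow_ne_zero q h2)]
      obtain ⟨i, _, hi⟩ := hprim.eq_pow_of_pow_eq_one hx
      have he : w₁ = ω ^ i * w₂ := ((eq_div_iff h2).mp hi).symm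
      rw [he, hrotk]
  -- the (discontinuous) q-th root
  set rt : ℂ → ℂ := fun z => z ^ ((q : ℂ)⁻¹) with hrtdef
  have hrtpow : ∀ z : ℂ, rt z ^ q = z := fun z => Complex.cpow_nat_inv_pow z hq0
  have hrt0 : rt 0 = 0 := by
    rw [hrtdef]
    exact Complex.zero_cpow (by simpa using hq0)
  -- the function h, a continuous q-th root of u ^ q
  set h : ℂ → ℂ := fun u => T (rt (u ^ q - c)) with hhdef
  have hval : ∀ u w : ℂ, w ^ q = u ^ q - c → h u = T w := by
    intro u w hw
    exact hfib _ _ (by rw [hrtpow, hw])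
  have hpow : ∀ u : ℂ, h u ^ q = u ^ q := by
    intro u
    show T (rt (u ^ q - c)) ^ q = u ^ q
    rw [hTq, hrtpow]; ring
  have hfibh : ∀ u₁ u₂ : ℂ, u₁ ^ q = u₂ ^ q → h u₁ = h u₂ := by
    intro u₁ u₂ e
    show T (rt (u₁ ^ q - c)) = T (rt (u₂ ^ q - c))
    rw [e]
  -- continuity of h
  have hcont : Continuous h := by
    rw [continuous_iff_continuousAt]
    intro u₀
    rcases eq_or_ne (u₀ ^ q - c) 0 with hz | hz
    · -- near a ramification point : use continuity of T at 0
      have habs : Filter.Tendsto (fun u => rt (u ^ q - c)) (nhds u₀) (nhds 0) := by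
        rw [tendsto_zero_iff_norm_tendsto_zero]
        have heq : ∀ u : ℂ, ‖rt (u ^ q - c)‖ = ‖u ^ q - c‖ ^ ((q:ℝ)⁻¹) := by
          intro u
          have h1 : ‖rt (u ^ q - c)‖ ^ q = ‖u ^ q - c‖ := by
            rw [← norm_pow, hrtpow]
          rw [← h1, Real.pow_rpow_inv_natCast (norm_nonneg _) hq0]
        simp only [heq]
        have c1 : Continuous fun u : ℂ => ‖u ^ q - c‖ :=
          ((continuous_pow q).sub continuous_const).norm
        have c2 : ContinuousAt (fun x : ℝ => x ^ ((q:ℝ)⁻¹)) ‖u₀ ^ q - c‖ :=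
          Real.continuousAt_rpow_const _ _ (Or.inr (by positivity))
        have hv : ((q:ℝ)⁻¹) ≠ 0 := by positivity
        have c3 := (ContinuousAt.comp (f := fun u : ℂ => ‖u ^ q - c‖) (x := u₀) c2
          c1.continuousAt).tendsto
        simpa [Function.comp_def, hz, Real.zero_rpow hv] using c3
      have hval0 : h u₀ = T 0 := by
        show T (rt (u₀ ^ q - c)) = T 0
        rw [hz, hrt0]
      show Filter.Tendsto h (nhds u₀) (nhds (h u₀))
      rw [hval0]
      exact Filter.Tendsto.comp (hT.continuousAt (x := 0)) habs
    · -- away from ramification : use a local continuous branch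
      set z₀ : ℂ := u₀ ^ q - c with hz₀def
      set w₀ : ℂ := rt z₀ with hw₀def
      set s : ℂ → ℂ := fun z => w₀ * ((z / z₀) ^ ((q:ℂ)⁻¹)) with hsdef
      have hspow : ∀ z : ℂ, s z ^ q = z₀ * (z / z₀) := by
        intro z
        show (w₀ * ((z / z₀) ^ ((q:ℂ)⁻¹))) ^ q = z₀ * (z / z₀)
        rw [mul_pow, Complex.cpow_nat_inv_pow (z / z₀) hq0]
        congr 1
        exact hrtpow z₀
      have hseq : ∀ u : ℂ, h u = T (s (u ^ q - c)) := by
        intro u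
        apply hval
        rw [hspow, mul_comm, div_mul_cancel₀ _ hz]
      have hs_cont : ContinuousAt s z₀ := by
        apply ContinuousAt.mul continuousAt_const
        have hdiv : ContinuousAt (fun z : ℂ => z / z₀) z₀ := continuousAt_id.div_const z₀
        have hcp : ContinuousAt (fun x : ℂ => x ^ ((q:ℂ)⁻¹)) (z₀ / z₀) := by
          rw [div_self hz]
          exact continuousAt_cpow_const Complex.one_mem_slitPlane
        exact ContinuousAt.comp (f := fun z : ℂ => z / z₀) (x := z₀) hcp hdiv
      have hin : ContinuousAt (fun u : ℂ => u ^ q - c) u₀ :=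
        ((continuous_pow q).sub continuous_const).continuousAt
      have hmid : ContinuousAt (fun u : ℂ => s (u ^ q - c)) u₀ :=
        ContinuousAt.comp (f := fun u : ℂ => u ^ q - c) (x := u₀) hs_cont hin
      have hpt : ContinuousAt (fun u : ℂ => T (s (u ^ q - c))) u₀ :=
        ContinuousAt.comp (f := fun u : ℂ => s (u ^ q - c)) (x := u₀) hT.continuousAt hmid
      have : h = fun u : ℂ => T (s (u ^ q - c)) := funext hseq
      rw [this]
      exact hpt
  -- Step 2: h u / u is constant on ℂ \ {0}
  have hV : IsPreconnected ({(0:ℂ)}ᶜ : Set ℂ) := by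
    have hpc := (Set.countable_singleton (0:ℂ)).isPathConnected_compl_of_one_lt_rank rank_fact
    exact hpc.isConnected.isPreconnected
  have key2 : ∀ u : ℂ, u ≠ 0 → h u / u = h 1 / 1 := by
    intro u hu
    refine const_of_finset hV (f := fun u => h u / u) ?_ S ?_ ?_ ?_
    · exact (hcont.continuousOn).div continuousOn_id fun x hx => hx
    · intro x hx
      apply hmemS
      rw [div_pow, hpow, div_self (pow_ne_zero q hx)]
    · exact hu
    · simp
  have hη : ∀ u : ℂ, u ≠ 0 → h u = h 1 * u := by
    intro u hu
    have := key2 u hu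
    rw [div_one] at this
    exact (div_eq_iff hu).mp this
  have hη0 : h 1 ≠ 0 := by
    intro h0
    have := hpow 1
    rw [h0, one_pow, zero_pow hq0] at this
    exact zero_ne_one this
  have hcontr : h ω = h 1 := hfibh ω 1 (by rw [hωq, one_pow])
  have hcontr2 : h ω = h 1 * ω := hη ω hωne0
  rw [hcontr] at hcontr2
  have hfin : h 1 * 1 = h 1 * ω := by rw [mul_one]; exact hcontr2
  exact hωne1 (mul_left_cancel₀ hη0 hfin).symm
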